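/- For the softened n-body Hamiltonian H in D spatial dimensions with equal masses m_i = m > 0 for all i, the centre-of-mass angular momentum R^{COM}_{d d'}(q, p) = (q_COM)_d (p_COM)_{d'} − (q_COM)_{d'} (p_COM)_d, where q_COM = (1/n) ∑_{i=1}^n q_i and p_COM = (1/n) ∑_{i=1}^n p_i, is a conserved quantity for each 1 ≤ d < d' ≤ D: {R^{COM}_{d d'}, H}(q, p) = 0 for all (q, p) ∈ ℝ^(2nD). -/

import Mathlib

open scoped BigOperators

/-- Partial derivative of `F` with respect to the position coordinate `q_{i,d}`
on the n-body phase space `(Fin N → Fin D → ℝ) × (Fin N → Fin D → ℝ)`. -/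
noncomputable def pderivQ {N D : ℕ}
    (F : (Fin N → Fin D → ℝ) × (Fin N → Fin D → ℝ) → ℝ)
    (x : (Fin N → Fin D → ℝ) × (Fin N → Fin D → ℝ)) (i : Fin N) (d : Fin D) : ℝ :=
  deriv (fun t => F (Function.update x.1 i (Function.update (x.1 i) d t), x.2)) (x.1 i d)

/-- Partial derivative of `F` with respect to the momentum coordinate `p_{i,d}`. -/
noncomputable def pderivP {N D : ℕ}
    (F : (Fin N → Fin D → ℝ) × (Fin N → Fin D → ℝ) → ℝ)
    (x : (Fin N → Fin D → ℝ) × (Fin N → Fin D → ℝ)) (i : Fin N) (d : Fin D) : ℝ :=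
  deriv (fun t => F (x.1, Function.update x.2 i (Function.update (x.2 i) d t))) (x.2 i d)

/-- Poisson bracket on the n-body phase space:
`{F, G}(x) = ∑_{i,d} (∂F/∂q_{i,d} ∂G/∂p_{i,d} − ∂F/∂p_{i,d} ∂G/∂q_{i,d})`. -/
noncomputable def poisson {N D : ℕ}
    (F G : (Fin N → Fin D → ℝ) × (Fin N → Fin D → ℝ) → ℝ)
    (x : (Fin N → Fin D → ℝ) × (Fin N → Fin D → ℝ)) : ℝ :=
  ∑ i, ∑ d, (pderivQ F x i d * pderivP G x i d - pderivP F x i d * pderivQ G x i d)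

/-- The softened n-body Hamiltonian in D spatial dimensions:
`H(q, p) = ∑ i ‖p_i‖²/(2 m_i) + ∑_{i ≠ j} G m_i m_j / √(‖q_i − q_j‖² + ε²)`. -/
noncomputable def nbodyH {N D : ℕ} (m : Fin N → ℝ) (G ε : ℝ)
    (x : (Fin N → Fin D → ℝ) × (Fin N → Fin D → ℝ)) : ℝ :=
  (∑ i, (∑ d, (x.2 i d) ^ 2) / (2 * m i)) +
    ∑ i, ∑ j, if i ≠ j then
      G * m i * m j / Real.sqrt ((∑ d, (x.1 i d - x.1 j d) ^ 2) + ε ^ 2)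
    else 0

-- helper 1: derivative of c / sqrt (f t)
lemma invsqrt_deriv (c : ℝ) {f : ℝ → ℝ} {v t₀ : ℝ} (hf : HasDerivAt f v t₀)
    (hpos : 0 < f t₀) :
    HasDerivAt (fun t => c / Real.sqrt (f t)) (-(c * v) / (2 * Real.sqrt (f t₀) ^ 3)) t₀ := by
  have hs0 : Real.sqrt (f t₀) ≠ 0 := by positivity
  have hs : HasDerivAt (fun t => Real.sqrt (f t)) (1 / (2 * Real.sqrt (f t₀)) * v) t₀ :=
    (Real.hasDerivAt_sqrt hpos.ne').comp t₀ hf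
  have h := (hasDerivAt_const t₀ c).fun_div hs hs0
  refine h.congr_deriv (Eq.symm ?_)
  rw [show Real.sqrt (f t₀) ^ 3 = f t₀ * Real.sqrt (f t₀) from by
    rw [pow_succ, Real.sq_sqrt hpos.le]]
  field_simp
  rw [Real.sq_sqrt hpos.le]; ring

-- helper 2: derivative of the squared-distance sum in one coordinate slot
lemma sq_sum_deriv {D : ℕ} (a b : Fin D → ℝ) (e : Fin D) :
    HasDerivAt (fun t => ∑ d, ((if d = e then t else a d) - b d) ^ 2)
      (2 * (a e - b e)) (a e) := by
  have h : ∀ d : Fin D, HasDerivAt (fun t => ((if d = e then t else a d) - b d) ^ 2)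
      (if d = e then 2 * (a e - b e) else 0) (a e) := by
    intro d
    by_cases hd : d = e
    · subst hd
      simp only [if_pos rfl]
      have := ((hasDerivAt_id (a d)).sub_const (b d)).fun_pow 2
      refine this.congr_deriv (Eq.symm ?_)
      simp [pow_one]
    · simp only [if_neg hd]
      exact hasDerivAt_const _ _
  have := HasDerivAt.fun_sum (fun d (_ : d ∈ Finset.univ) => h d)
  simpa using this

-- sum of a column after an update
lemma upd_sum {N D : ℕ} (f : Fin N → Fin D → ℝ) (i : Fin N) (e : Fin D) (t : ℝ) (d : Fin D) :
    (∑ j, Function.update f i (Function.update (f i) e t) j d)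
      = (∑ j, f j d) + (if d = e then t - f i d else 0) := by
  have h : ∀ j, Function.update f i (Function.update (f i) e t) j d
      = f j d + (if j = i then (if d = e then t - f i d else 0) else 0) := by
    intro j
    rcases eq_or_ne j i with hj | hj <;> rcases eq_or_ne d e with hd | hd <;>
      simp [hj, hd, Function.update_apply] <;> ring
  simp only [h, Finset.sum_add_distrib, Finset.sum_ite_eq', Finset.mem_univ, if_true]

-- sum of all squares after an update
lemma upd_sq_sum {N D : ℕ} (p : Fin N → Fin D → ℝ) (i : Fin N) (e : Fin D) (t : ℝ) :
    (∑ i', ∑ e', (Function.update p i (Function.update (p i) e t) i' e') ^ 2)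
      = (∑ i', ∑ e', (p i' e') ^ 2) + (t ^ 2 - (p i e) ^ 2) := by
  have h : ∀ i' e', (Function.update p i (Function.update (p i) e t) i' e') ^ 2
      = (p i' e') ^ 2 + (if i' = i then (if e' = e then t ^ 2 - p i e ^ 2 else 0) else 0) := by
    intro i' e'
    rcases eq_or_ne i' i with h1 | h1 <;> rcases eq_or_ne e' e with h2 | h2 <;>
      simp [h1, h2, Function.update_apply] <;> ring
  simp only [h, Finset.sum_add_distrib]
  congr 1
  rw [Finset.sum_eq_single i]
  · simp
  · intro b _ hb; simp [hb]
  · simp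

lemma pderivQ_R {N D : ℕ} (x : (Fin N → Fin D → ℝ) × (Fin N → Fin D → ℝ))
    (d d' : Fin D) (i : Fin N) (e : Fin D) :
    pderivQ (fun y =>
        ((∑ i, y.1 i d) / N) * ((∑ i, y.2 i d') / N) -
        ((∑ i, y.1 i d') / N) * ((∑ i, y.2 i d) / N)) x i e
    = ((if d = e then 1 else 0) * (∑ j, x.2 j d')
        - (if d' = e then 1 else 0) * (∑ j, x.2 j d)) / (N : ℝ) ^ 2 := by
  unfold pderivQ
  simp only [upd_sum]
  apply HasDerivAt.deriv
  have h1 : HasDerivAt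
      (fun t : ℝ => ((∑ j, x.1 j d) + (if d = e then t - x.1 i d else 0)) / (N : ℝ))
      ((if d = e then 1 else 0) / (N : ℝ)) (x.1 i e) := by
    by_cases hd : d = e
    · simp only [if_pos hd]
      exact (((hasDerivAt_id _).sub_const _).const_add _).div_const _
    · simp only [if_neg hd, add_zero, zero_div]
      exact hasDerivAt_const _ _
  have h2 : HasDerivAt
      (fun t : ℝ => ((∑ j, x.1 j d') + (if d' = e then t - x.1 i d' else 0)) / (N : ℝ))
      ((if d' = e then 1 else 0) / (N : ℝ)) (x.1 i e) := by
    by_cases hd : d' = e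
    · simp only [if_pos hd]
      exact (((hasDerivAt_id _).sub_const _).const_add _).div_const _
    · simp only [if_neg hd, add_zero, zero_div]
      exact hasDerivAt_const _ _
  have h := (h1.mul_const ((∑ j, x.2 j d') / (N : ℝ))).fun_sub
      (h2.mul_const ((∑ j, x.2 j d) / (N : ℝ)))
  convert h using 1
  ring

lemma pderivP_R {N D : ℕ} (x : (Fin N → Fin D → ℝ) × (Fin N → Fin D → ℝ))
    (d d' : Fin D) (i : Fin N) (e : Fin D) :
    pderivP (fun y =>
        ((∑ i, y.1 i d) / N) * ((∑ i, y.2 i d') / N) -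
        ((∑ i, y.1 i d') / N) * ((∑ i, y.2 i d) / N)) x i e
    = ((if d' = e then 1 else 0) * (∑ j, x.1 j d)
        - (if d = e then 1 else 0) * (∑ j, x.1 j d')) / (N : ℝ) ^ 2 := by
  unfold pderivP
  simp only [upd_sum]
  apply HasDerivAt.deriv
  have h1 : HasDerivAt
      (fun t : ℝ => ((∑ j, x.2 j d') + (if d' = e then t - x.2 i d' else 0)) / (N : ℝ))
      ((if d' = e then 1 else 0) / (N : ℝ)) (x.2 i e) := by
    by_cases hd : d' = e
    · simp only [if_pos hd]
      exact (((hasDerivAt_id _).sub_const _).const_add _).div_const _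
    · simp only [if_neg hd, add_zero, zero_div]
      exact hasDerivAt_const _ _
  have h2 : HasDerivAt
      (fun t : ℝ => ((∑ j, x.2 j d) + (if d = e then t - x.2 i d else 0)) / (N : ℝ))
      ((if d = e then 1 else 0) / (N : ℝ)) (x.2 i e) := by
    by_cases hd : d = e
    · simp only [if_pos hd]
      exact (((hasDerivAt_id _).sub_const _).const_add _).div_const _
    · simp only [if_neg hd, add_zero, zero_div]
      exact hasDerivAt_const _ _
  have h := (h1.const_mul ((∑ j, x.1 j d) / (N : ℝ))).fun_sub
      (h2.const_mul ((∑ j, x.1 j d') / (N : ℝ)))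
  convert h using 1
  ring

lemma pderivP_H {N D : ℕ} (m G ε : ℝ) (hm : m ≠ 0)
    (x : (Fin N → Fin D → ℝ) × (Fin N → Fin D → ℝ)) (i : Fin N) (e : Fin D) :
    pderivP (nbodyH (fun _ => m) G ε) x i e = x.2 i e / m := by
  unfold pderivP nbodyH
  simp only [← Finset.sum_div, upd_sq_sum]
  apply HasDerivAt.deriv
  have h := ((((hasDerivAt_pow 2 (x.2 i e)).sub_const ((x.2 i e) ^ 2)).const_add
      (∑ i', ∑ e', (x.2 i' e') ^ 2)).div_const (2 * m)).add_const
      (∑ i', ∑ j', if i' ≠ j' then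
        G * m * m / Real.sqrt ((∑ d, (x.1 i' d - x.1 j' d) ^ 2) + ε ^ 2) else 0)
  convert h using 1
  field_simp
  ring

lemma pderivQ_H {N D : ℕ} (m G ε : ℝ) (hε : 0 < ε)
    (x : (Fin N → Fin D → ℝ) × (Fin N → Fin D → ℝ)) (i : Fin N) (e : Fin D) :
    pderivQ (nbodyH (fun _ => m) G ε) x i e
      = ∑ j, (if i = j then 0 else
          -(2 * (G * m * m)) / Real.sqrt ((∑ d, (x.1 i d - x.1 j d) ^ 2) + ε ^ 2) ^ 3)
          * (x.1 i e - x.1 j e) := by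
  have key : HasDerivAt
      (fun t => ∑ i', ∑ j', if i' ≠ j' then
          G * m * m / Real.sqrt ((∑ d,
            (Function.update x.1 i (Function.update (x.1 i) e t) i' d
              - Function.update x.1 i (Function.update (x.1 i) e t) j' d) ^ 2) + ε ^ 2)
        else 0)
      (∑ i', ∑ j',
        ((if i' = i then
            (-(G * m * m) / Real.sqrt ((∑ d, (x.1 i d - x.1 j' d) ^ 2) + ε ^ 2) ^ 3)
              * (x.1 i e - x.1 j' e) else 0)
         + (if j' = i then
            (-(G * m * m) / Real.sqrt ((∑ d, (x.1 i' d - x.1 i d) ^ 2) + ε ^ 2) ^ 3)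
              * (x.1 i e - x.1 i' e) else 0)))
      (x.1 i e) := by
    refine HasDerivAt.fun_sum fun i' _ => HasDerivAt.fun_sum fun j' _ => ?_
    by_cases hij : i' = j'
    · subst hij
      simp only [ne_eq, not_true_eq_false, if_false]
      by_cases hi : i' = i
      · subst hi
        simpa [sub_self] using hasDerivAt_const (x.1 i' e) (0 : ℝ)
      · simpa [hi] using hasDerivAt_const (x.1 i e) (0 : ℝ)
    · simp only [ne_eq, hij, not_false_iff, if_true]
      by_cases h1 : i' = i
      · subst h1
        have hji : j' ≠ i' := fun h => hij h.symm
        have hfun : (fun t => G * m * m / Real.sqrt ((∑ d,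
              (Function.update x.1 i' (Function.update (x.1 i') e t) i' d
                - Function.update x.1 i' (Function.update (x.1 i') e t) j' d) ^ 2) + ε ^ 2))
            = fun t => G * m * m / Real.sqrt
                ((∑ d, ((if d = e then t else x.1 i' d) - x.1 j' d) ^ 2) + ε ^ 2) := by
          funext t
          have hs : (∑ d, (Function.update x.1 i' (Function.update (x.1 i') e t) i' d
                - Function.update x.1 i' (Function.update (x.1 i') e t) j' d) ^ 2)
              = ∑ d, ((if d = e then t else x.1 i' d) - x.1 j' d) ^ 2 :=
            Finset.sum_congr rfl fun d _ => by simp [Function.update_apply, hji]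
          rw [hs]
        rw [hfun]
        have hS := (sq_sum_deriv (x.1 i') (x.1 j') e).add_const (ε ^ 2)
        have heval : ((∑ d, ((if d = e then x.1 i' e else x.1 i' d) - x.1 j' d) ^ 2) + ε ^ 2)
            = (∑ d, (x.1 i' d - x.1 j' d) ^ 2) + ε ^ 2 := by
          congr 1
          refine Finset.sum_congr rfl fun d _ => ?_
          by_cases hd : d = e <;> simp [hd]
        have hpos : 0 < (∑ d, ((if d = e then x.1 i' e else x.1 i' d) - x.1 j' d) ^ 2) + ε ^ 2 := by
          positivity
        have h := invsqrt_deriv (G * m * m) hS hpos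
        rw [heval] at h
        refine h.congr_deriv (Eq.symm ?_)
        rw [if_pos rfl, if_neg hji, add_zero]
        ring
      · by_cases h2 : j' = i
        · subst h2
          have hfun : (fun t => G * m * m / Real.sqrt ((∑ d,
                (Function.update x.1 j' (Function.update (x.1 j') e t) i' d
                  - Function.update x.1 j' (Function.update (x.1 j') e t) j' d) ^ 2) + ε ^ 2))
              = fun t => G * m * m / Real.sqrt
                  ((∑ d, ((if d = e then t else x.1 j' d) - x.1 i' d) ^ 2) + ε ^ 2) := by
            funext t
            have hs : (∑ d, (Function.update x.1 j' (Function.update (x.1 j') e t) i' d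
                  - Function.update x.1 j' (Function.update (x.1 j') e t) j' d) ^ 2)
                = ∑ d, ((if d = e then t else x.1 j' d) - x.1 i' d) ^ 2 :=
              Finset.sum_congr rfl fun d _ => by
                simp [Function.update_apply, h1]
                ring
            rw [hs]
          rw [hfun]
          have hS := (sq_sum_deriv (x.1 j') (x.1 i') e).add_const (ε ^ 2)
          have heval : ((∑ d, ((if d = e then x.1 j' e else x.1 j' d) - x.1 i' d) ^ 2) + ε ^ 2)
              = (∑ d, (x.1 i' d - x.1 j' d) ^ 2) + ε ^ 2 := by
            congr 1
            refine Finset.sum_congr rfl fun d _ => ?_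
            by_cases hd : d = e <;> simp [hd] <;> ring
          have hpos : 0 < (∑ d, ((if d = e then x.1 j' e else x.1 j' d) - x.1 i' d) ^ 2) + ε ^ 2 := by
            positivity
          have h := invsqrt_deriv (G * m * m) hS hpos
          rw [heval] at h
          refine h.congr_deriv (Eq.symm ?_)
          rw [if_neg h1, if_pos rfl, zero_add]
          ring
        · have hfun : (fun t => G * m * m / Real.sqrt ((∑ d,
                (Function.update x.1 i (Function.update (x.1 i) e t) i' d
                  - Function.update x.1 i (Function.update (x.1 i) e t) j' d) ^ 2) + ε ^ 2))
              = fun _ => G * m * m / Real.sqrt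
                  ((∑ d, (x.1 i' d - x.1 j' d) ^ 2) + ε ^ 2) := by
            funext t
            have hs : (∑ d, (Function.update x.1 i (Function.update (x.1 i) e t) i' d
                  - Function.update x.1 i (Function.update (x.1 i) e t) j' d) ^ 2)
                = ∑ d, (x.1 i' d - x.1 j' d) ^ 2 :=
              Finset.sum_congr rfl fun d _ => by simp [Function.update_apply, h1, h2]
            rw [hs]
          rw [hfun]
          simpa [h1, h2] using hasDerivAt_const (x.1 i e)
            (G * m * m / Real.sqrt ((∑ d, (x.1 i' d - x.1 j' d) ^ 2) + ε ^ 2))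
  have h2 : pderivQ (nbodyH (fun _ => m) G ε) x i e
      = ∑ i', ∑ j',
        ((if i' = i then
            (-(G * m * m) / Real.sqrt ((∑ d, (x.1 i d - x.1 j' d) ^ 2) + ε ^ 2) ^ 3)
              * (x.1 i e - x.1 j' e) else 0)
         + (if j' = i then
            (-(G * m * m) / Real.sqrt ((∑ d, (x.1 i' d - x.1 i d) ^ 2) + ε ^ 2) ^ 3)
              * (x.1 i e - x.1 i' e) else 0)) := by
    have hfun : (fun t => nbodyH (fun _ => m) G ε
          (Function.update x.1 i (Function.update (x.1 i) e t), x.2))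
        = fun t => (∑ i', (∑ e', (x.2 i' e') ^ 2) / (2 * m)) +
            ∑ i', ∑ j', if i' ≠ j' then
              G * m * m / Real.sqrt ((∑ d,
                (Function.update x.1 i (Function.update (x.1 i) e t) i' d
                  - Function.update x.1 i (Function.update (x.1 i) e t) j' d) ^ 2) + ε ^ 2)
            else 0 := by
      funext t
      rfl
    unfold pderivQ
    rw [hfun]
    exact (key.const_add _).deriv
  rw [h2]
  simp only [Finset.sum_add_distrib]
  have hA : (∑ i', ∑ j', (if i' = i then
        (-(G * m * m) / Real.sqrt ((∑ d, (x.1 i d - x.1 j' d) ^ 2) + ε ^ 2) ^ 3)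
          * (x.1 i e - x.1 j' e) else 0))
      = ∑ j', (-(G * m * m) / Real.sqrt ((∑ d, (x.1 i d - x.1 j' d) ^ 2) + ε ^ 2) ^ 3)
          * (x.1 i e - x.1 j' e) := by
    rw [Finset.sum_eq_single i]
    · simp
    · intro b _ hb; simp [hb]
    · simp
  have hB : (∑ i', ∑ j', (if j' = i then
        (-(G * m * m) / Real.sqrt ((∑ d, (x.1 i' d - x.1 i d) ^ 2) + ε ^ 2) ^ 3)
          * (x.1 i e - x.1 i' e) else 0))
      = ∑ i', (-(G * m * m) / Real.sqrt ((∑ d, (x.1 i' d - x.1 i d) ^ 2) + ε ^ 2) ^ 3)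
          * (x.1 i e - x.1 i' e) := by
    refine Finset.sum_congr rfl fun i' _ => ?_
    simp [Finset.sum_ite_eq']
  rw [hA, hB, ← Finset.sum_add_distrib]
  refine Finset.sum_congr rfl fun j _ => ?_
  by_cases hj : i = j
  · subst hj; simp [sub_self]
  · have hsymm : (∑ d, (x.1 j d - x.1 i d) ^ 2) = ∑ d, (x.1 i d - x.1 j d) ^ 2 := by
      refine Finset.sum_congr rfl fun d _ => ?_
      ring
    rw [hsymm]
    simp only [if_neg hj]
    ring

lemma antisym_cancel {N : ℕ} (σ : Fin N → Fin N → ℝ) (hσ : ∀ i j, σ i j = σ j i)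
    (v : Fin N → ℝ) : ∑ i, ∑ j, σ i j * (v i - v j) = 0 := by
  have h : (∑ i, ∑ j, σ i j * (v i - v j)) = -∑ i, ∑ j, σ i j * (v i - v j) := by
    conv_lhs => rw [Finset.sum_comm]
    rw [← Finset.sum_neg_distrib]
    refine Finset.sum_congr rfl fun i _ => ?_
    rw [← Finset.sum_neg_distrib]
    refine Finset.sum_congr rfl fun j _ => ?_
    rw [hσ i j]
    ring
  linarith

/-- With equal masses, the centre-of-mass angular momentum
`R^COM_{d d'}(q, p) = (q_COM)_d (p_COM)_{d'} − (q_COM)_{d'} (p_COM)_d`, where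
`q_COM = (1/n) ∑ i q_i` and `p_COM = (1/n) ∑ i p_i`, is a conserved quantity of
the softened n-body Hamiltonian: `{R^COM_{d d'}, H} = 0` everywhere. -/
theorem com_angular_momentum_conserved {N D : ℕ} (m : ℝ) (hm : 0 < m)
    (G ε : ℝ) (hG : 0 < G) (hε : 0 < ε) (d d' : Fin D) (hdd' : d < d') :
    ∀ x : (Fin N → Fin D → ℝ) × (Fin N → Fin D → ℝ),
      poisson
        (fun y =>
          ((∑ i, y.1 i d) / N) * ((∑ i, y.2 i d') / N) -
          ((∑ i, y.1 i d') / N) * ((∑ i, y.2 i d) / N))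
        (nbodyH (fun _ => m) G ε) x = 0 := by
  intro x
  have hm' : m ≠ 0 := hm.ne'
  have hne : d ≠ d' := hdd'.ne
  have hne' : d' ≠ d := hdd'.ne'
  unfold poisson
  have h1 := fun (i : Fin N) (e : Fin D) => pderivQ_R x d d' i e
  have h2 := fun (i : Fin N) (e : Fin D) => pderivP_R x d d' i e
  have h3 := fun (i : Fin N) (e : Fin D) => pderivP_H m G ε hm' x i e
  have h4 := fun (i : Fin N) (e : Fin D) => pderivQ_H m G ε hε x i e
  simp only [h1, h2, h3, h4]
  -- abbreviations
  have hD : ∀ e' : Fin D, (∑ i, ∑ j, (if i = j then 0 else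
      -(2 * (G * m * m)) / Real.sqrt ((∑ d, (x.1 i d - x.1 j d) ^ 2) + ε ^ 2) ^ 3)
        * (x.1 i e' - x.1 j e')) = 0 := by
    intro e'
    refine antisym_cancel _ (fun i j => ?_) (fun i => x.1 i e')
    by_cases h : i = j
    · simp [h]
    · have hS : (∑ d, (x.1 i d - x.1 j d) ^ 2) = ∑ d, (x.1 j d - x.1 i d) ^ 2 :=
        Finset.sum_congr rfl fun d _ => by ring
      simp [h, Ne.symm h, hS]
  have hsummand : ∀ (i : Fin N) (e : Fin D),
      ((if d = e then 1 else 0) * (∑ j, x.2 j d')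
        - (if d' = e then 1 else 0) * (∑ j, x.2 j d)) / (N : ℝ) ^ 2 * (x.2 i e / m)
      - ((if d' = e then 1 else 0) * (∑ j, x.1 j d)
        - (if d = e then 1 else 0) * (∑ j, x.1 j d')) / (N : ℝ) ^ 2
        * (∑ j, (if i = j then 0 else
            -(2 * (G * m * m)) / Real.sqrt ((∑ d, (x.1 i d - x.1 j d) ^ 2) + ε ^ 2) ^ 3)
            * (x.1 i e - x.1 j e))
      = (if e = d then
            (∑ j, x.2 j d') / (N : ℝ) ^ 2 * (x.2 i d / m)
            + ((∑ j, x.1 j d') / (N : ℝ) ^ 2)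
              * (∑ j, (if i = j then 0 else
                  -(2 * (G * m * m)) / Real.sqrt ((∑ d, (x.1 i d - x.1 j d) ^ 2) + ε ^ 2) ^ 3)
                  * (x.1 i d - x.1 j d))
          else 0)
        + (if e = d' then
            -((∑ j, x.2 j d) / (N : ℝ) ^ 2 * (x.2 i d' / m))
            - ((∑ j, x.1 j d) / (N : ℝ) ^ 2)
              * (∑ j, (if i = j then 0 else
                  -(2 * (G * m * m)) / Real.sqrt ((∑ d, (x.1 i d - x.1 j d) ^ 2) + ε ^ 2) ^ 3)
                  * (x.1 i d' - x.1 j d'))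
          else 0) := by
    intro i e
    by_cases he : e = d
    · subst he
      simp only [if_pos rfl, if_neg hne', if_neg hne, eq_self_iff_true, if_true]
      ring
    · by_cases he' : e = d'
      · subst he'
        simp only [if_pos rfl, if_neg hne', if_neg hne, eq_self_iff_true, if_true]
        ring
      · have hde : d ≠ e := fun h => he h.symm
        have hd'e : d' ≠ e := fun h => he' h.symm
        simp [he, he', hde, hd'e]
  simp only [hsummand]
  simp only [Finset.sum_add_distrib, Finset.sum_sub_distrib, Finset.sum_ite_eq',
    Finset.mem_univ, if_true, ← Finset.mul_sum, Finset.sum_neg_distrib]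
  rw [hD d, hD d']
  rw [← Finset.sum_div, ← Finset.sum_div]
  ring
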